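/- (Forward direction of Moulin's theorem.) Let N be a finite set of voters, 𝒞 an M-winning coalition set on N, and f the M-winning coalition rule associated with 𝒞. Then f is neutral and strategy-proof. -/
import Mathlib


/-- A rule is strategy-proof if whenever a voter's misreport would give his true
preference, truthful reporting gives it as well. -/
def StrategyProof {N : Type*} [DecidableEq N] (f : (N → Bool) → Bool) : Prop :=
  ∀ (R : N → Bool) (i : N) (b : Bool), f (Function.update R i b) = R i → f R = R i

/-- A rule is neutral if it commutes with flipping the two candidates. -/
def Neutral {N : Type*} (f : (N → Bool) → Bool) : Prop :=
  ∀ R : N → Bool, f (fun i => !(R i)) = !(f R)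

/-- An M-winning coalition set: nonempty, members nonempty, minimality (P1),
and Moulin's property (P2). -/
def IsMWCS {N : Type*} [DecidableEq N] (𝒞 : Set (Finset N)) : Prop :=
  𝒞.Nonempty ∧ (∀ C ∈ 𝒞, C.Nonempty) ∧
    (∀ C ∈ 𝒞, ∀ C' ∈ 𝒞, C ⊆ C' → C = C') ∧
    (∀ C : Finset N, (∃ C' ∈ 𝒞, C' ⊆ C) ↔ ∀ C'' ∈ 𝒞, (C ∩ C'').Nonempty)

/-- `f` is the M-winning coalition rule associated with `𝒞`. -/
def IsMWCRule {N : Type*} (𝒞 : Set (Finset N)) (f : (N → Bool) → Bool) : Prop :=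
  ∀ (R : N → Bool) (x : Bool), f R = x ↔ ∃ C ∈ 𝒞, ∀ i ∈ C, R i = x

/-- `g` is the sequential unanimity rule associated with the sequence `S`. -/
def IsSURule {N : Type*} {K : ℕ} (S : Fin K → Finset N) (g : (N → Bool) → Bool) : Prop :=
  ∀ (R : N → Bool) (x : Bool),
    g R = x ↔ ∃ k : Fin K, (∀ i ∈ S k, R i = x) ∧
      ∀ l < k, ∃ i ∈ S l, ∃ j ∈ S l, R i ≠ R j

/-- Forward direction of Moulin's theorem: the M-winning coalition rule associated with an
M-winning coalition set is neutral and strategy-proof. -/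
theorem stmt2 {N : Type*} [Fintype N] [DecidableEq N] (𝒞 : Set (Finset N))
    (h𝒞 : IsMWCS 𝒞) (f : (N → Bool) → Bool) (hf : IsMWCRule 𝒞 f) :
    Neutral f ∧ StrategyProof f := by
  constructor
  · intro R
    obtain ⟨C, hC, hall⟩ := (hf R (f R)).mp rfl
    exact (hf (fun i => !(R i)) (!(f R))).mpr ⟨C, hC, fun i hi => by rw [hall i hi]⟩
  · intro R i b h
    obtain ⟨C, hC, hall⟩ := (hf _ (R i)).mp h
    by_cases hi : i ∈ C
    · have hb : b = R i := by simpa using hall i hi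
      rwa [hb, Function.update_eq_self] at h
    · exact (hf R (R i)).mpr ⟨C, hC, fun j hj => by
        have := hall j hj
        rwa [Function.update_of_ne (by rintro rfl; exact hi hj)] at this⟩
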